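/- Let D be a finite database instance in which all tuples are endogenous, let Q be a monotone query with answer sets, and let ā ∈ Q(D). Then a tuple t ∈ D is an actual cause for ā if and only if there exists a subset D' ⊆ D with t ∈ D ∖ D' such that D' is a solution to the minimal source-side-effect problem for ā, i.e., ā ∉ Q(D') and D' is subset-maximal among subsets of D with ā ∉ Q(D'). -/

import Mathlib

/-- For a database `D` (all tuples endogenous), a monotone query `Q` with
answer sets, and `a ∈ Q D`: a tuple `t ∈ D` is an actual cause for `a` iff there is a
subset `D' ⊆ D` with `t ∈ D \ D'` such that `D'` is a solution to the minimal
source-side-effect problem for `a` (`a ∉ Q D'`, with `D'` subset-maximal among subsets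
of `D` having this property). -/
theorem stmt_6 {α β : Type*} [DecidableEq α]
    (D : Finset α)
    (Q : Finset α → Set β)
    (hmono : ∀ ⦃A B : Finset α⦄, A ⊆ B → Q A ⊆ Q B)
    (a : β) (ha : a ∈ Q D)
    (t : α) (ht : t ∈ D) :
    (∃ Γ ⊆ D, a ∈ Q (D \ Γ) ∧ a ∉ Q (D \ (Γ ∪ {t}))) ↔
    (∃ D' ⊆ D, t ∈ D \ D' ∧ a ∉ Q D' ∧ ∀ D'' ⊆ D, a ∉ Q D'' → ¬ D' ⊂ D'') := by
  classical
  constructor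
  · rintro ⟨Γ, hΓD, haΓ, haΓt⟩
    set seed := D \ (Γ ∪ {t}) with hseed
    set S := D.powerset.filter (fun X => a ∉ Q X ∧ seed ⊆ X) with hS
    have hne : S.Nonempty := ⟨seed, by
      simp only [hS, Finset.mem_filter, Finset.mem_powerset]
      exact ⟨Finset.sdiff_subset, haΓt, subset_rfl⟩⟩
    obtain ⟨D', hD'S, hmax⟩ := S.exists_maximal hne
    simp only [hS, Finset.mem_filter, Finset.mem_powerset] at hD'S
    obtain ⟨hD'D, haD', hseedD'⟩ := hD'S
    have htD' : t ∉ D' := by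
      intro htD'
      apply haD'
      apply hmono (B := D') _ haΓ
      intro x hx
      rcases Finset.mem_sdiff.mp hx with ⟨hxD, hxΓ⟩
      by_cases hxt : x = t
      · exact hxt ▸ htD'
      · exact hseedD' (by simp [hseed, hxD, hxΓ, hxt])
    refine ⟨D', hD'D, Finset.mem_sdiff.mpr ⟨ht, htD'⟩, haD', ?_⟩
    intro D'' hD'' haD'' hlt
    exact not_subset_of_ssubset hlt (hmax (y := D'') (by
      simp only [hS, Finset.mem_filter, Finset.mem_powerset]
      exact ⟨hD'', haD'', hseedD'.trans hlt.subset⟩) hlt.subset)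
  · rintro ⟨D', hD'D, htD', haD', hmax⟩
    rw [Finset.mem_sdiff] at htD'
    refine ⟨D \ (D' ∪ {t}), Finset.sdiff_subset, ?_, ?_⟩
    · have h1 : D \ (D \ (D' ∪ {t})) = D' ∪ {t} := by
        have hsub : D' ∪ {t} ⊆ D :=
          Finset.union_subset hD'D (Finset.singleton_subset_iff.mpr ht)
        exact Finset.sdiff_sdiff_eq_self hsub
      rw [h1]
      by_contra hcon
      exact hmax (D' ∪ {t})
        (Finset.union_subset hD'D (Finset.singleton_subset_iff.mpr ht)) hcon
        (Finset.ssubset_iff_of_subset Finset.subset_union_left |>.mpr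
          ⟨t, by simp [htD'.2]⟩)
    · have h2 : D \ (D \ (D' ∪ {t}) ∪ {t}) = D' := by
        ext x
        simp only [Finset.mem_sdiff, Finset.mem_union, Finset.mem_singleton]
        constructor
        · rintro ⟨hxD, hx⟩
          push_neg at hx
          obtain ⟨h3, h4⟩ := hx
          rcases h3 hxD with h | h
          · exact h
          · exact absurd h h4
        · intro hx
          have hxt : x ≠ t := fun h => htD'.2 (h ▸ hx)
          refine ⟨hD'D hx, ?_⟩
          push_neg
          exact ⟨fun _ => Or.inl hx, hxt⟩
      rw [h2]; exact haD'
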